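/- Measurable Komlós-type lemma with parameters: Let (X, F^X) and (Y, F^Y) be standard Borel spaces, Y^n : X × Y → ℝ measurable (n ∈ ℕ), P : X → P(Y) a measurable kernel, and C : X × Y → ℝ measurable with inf_n Y^n(x,·) ≥ C(x,·) P(x)-a.s. for every x ∈ X. Then there exist measurable functions Ỹ^n : X × Y → ℝ and Ỹ : X × Y → ℝ ∪ {+∞}, and measurable weights λ^n_k : X → [0,1] summing to 1 in k, such that Ỹ^n(x,·) = Σ_k λ^n_k(x) Y^k(x,·) lies in the convex hull of {Y^n(x,·), Y^{n+1}(x,·), ...} for every x, and for every x ∈ X, Ỹ^n(x, y) → Ỹ(x, y) for P(x)-almost every y ∈ Y. -/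

import Mathlib

open MeasureTheory ProbabilityTheory Filter
open scoped ENNReal Classical

noncomputable section
set_option linter.unusedSectionVars false
set_option linter.unusedTactic false
set_option maxHeartbeats 1000000

namespace MKomlos


/-! ### basic list machinery for rational convex combinations -/

def cf (l : List (ℚ × ℕ)) : ℝ := (l.map fun p => (p.1 : ℝ)).sum

def wt (l : List (ℚ × ℕ)) (k : ℕ) : ℝ :=
  ((l.filter fun p => p.2 = k).map fun p => (p.1 : ℝ)).sum

def ok (n : ℕ) (l : List (ℚ × ℕ)) : Prop :=
  (∀ p ∈ l, 0 ≤ p.1) ∧ cf l = 1 ∧ ∀ p ∈ l, n ≤ p.2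

lemma wt_nonneg {l : List (ℚ × ℕ)} (h : ∀ p ∈ l, 0 ≤ p.1) (k : ℕ) : 0 ≤ wt l k := by
  apply List.sum_nonneg
  intro a ha
  simp only [List.mem_map] at ha
  obtain ⟨p, hp, rfl⟩ := ha
  exact_mod_cast h p (List.mem_of_mem_filter hp)

lemma wt_cons (p : ℚ × ℕ) (l : List (ℚ × ℕ)) (k : ℕ) :
    wt (p :: l) k = (if p.2 = k then (p.1 : ℝ) else 0) + wt l k := by
  unfold wt
  by_cases h : p.2 = k <;> simp [List.filter_cons, h]

lemma wt_le_cf {l : List (ℚ × ℕ)} (h : ∀ p ∈ l, 0 ≤ p.1) (k : ℕ) : wt l k ≤ cf l := by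
  induction l with
  | nil => simp [wt, cf]
  | cons p t ih =>
    have ht : ∀ q ∈ t, 0 ≤ q.1 := fun q hq => h q (List.mem_cons_of_mem _ hq)
    have hp : (0:ℝ) ≤ (p.1 : ℝ) := by exact_mod_cast h p (List.mem_cons_self)
    have : cf (p :: t) = (p.1 : ℝ) + cf t := by simp [cf]
    rw [wt_cons, this]
    have := ih ht
    by_cases hk : p.2 = k <;> simp [hk] <;> linarith

lemma wt_eq_zero_of_lt {n : ℕ} {l : List (ℚ × ℕ)} (h : ∀ p ∈ l, n ≤ p.2) {k : ℕ}
    (hk : k < n) : wt l k = 0 := by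
  unfold wt
  have : (l.filter fun p => p.2 = k) = [] := by
    apply List.filter_eq_nil_iff.2
    intro p hp
    simp only [decide_eq_true_eq]
    intro hpk
    have := h p hp
    omega
  rw [this]
  simp

lemma wt_ne_zero_mem {l : List (ℚ × ℕ)} {k : ℕ} (h : wt l k ≠ 0) :
    k ∈ l.map Prod.snd := by
  by_contra hk
  apply h
  unfold wt
  have : (l.filter fun p => p.2 = k) = [] := by
    apply List.filter_eq_nil_iff.2
    intro p hp
    simp only [decide_eq_true_eq]
    intro hpk
    exact hk (by simp only [List.mem_map]; exact ⟨p, hp, hpk⟩)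
  rw [this]
  simp

lemma summable_wt_mul (l : List (ℚ × ℕ)) (c : ℕ → ℝ) :
    Summable fun k => wt l k * c k := by
  apply summable_of_ne_finset_zero (s := (l.map Prod.snd).toFinset)
  intro k hk
  have : wt l k = 0 := by
    by_contra h
    exact hk (List.mem_toFinset.2 (wt_ne_zero_mem h))
  simp [this]

lemma tsum_wt_mul (l : List (ℚ × ℕ)) (c : ℕ → ℝ) :
    ∑' k, wt l k * c k = (l.map fun p => (p.1 : ℝ) * c p.2).sum := by
  induction l with
  | nil => simp [wt]
  | cons p t ih =>
    have h1 : ∀ k, wt (p :: t) k * c k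
        = (if k = p.2 then (p.1 : ℝ) * c p.2 else 0) + wt t k * c k := by
      intro k
      rw [wt_cons]
      by_cases h : p.2 = k
      · subst h; simp [add_mul]
      · simp [h, Ne.symm h, fun h' : k = p.2 => h h'.symm]
    calc ∑' k, wt (p :: t) k * c k
        = ∑' k, ((if k = p.2 then (p.1 : ℝ) * c p.2 else 0) + wt t k * c k) := by
          exact tsum_congr h1
      _ = (∑' k, (if k = p.2 then (p.1 : ℝ) * c p.2 else 0)) + ∑' k, wt t k * c k := by
          apply Summable.tsum_add
          · exact summable_of_ne_finset_zero (s := {p.2}) (by intro k hk; simp at hk; simp [hk])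
          · exact summable_wt_mul t c
      _ = (p.1 : ℝ) * c p.2 + ∑' k, wt t k * c k := by rw [tsum_ite_eq]
      _ = ((p :: t).map fun p => (p.1 : ℝ) * c p.2).sum := by rw [ih]; simp




variable {X Y : Type*} [MeasurableSpace X] [MeasurableSpace Y]

def gv (f : ℕ → X × Y → ℝ) (l : List (ℚ × ℕ)) (z : X × Y) : ℝ :=
  (l.map fun p => (p.1 : ℝ) * f p.2 z).sum

def half (l : List (ℚ × ℕ)) : List (ℚ × ℕ) := l.map fun p => (p.1 / 2, p.2)

def avg (l₁ l₂ : List (ℚ × ℕ)) : List (ℚ × ℕ) := half l₁ ++ half l₂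

lemma gv_half (f : ℕ → X × Y → ℝ) (l : List (ℚ × ℕ)) (z : X × Y) :
    gv f (half l) z = gv f l z / 2 := by
  unfold gv half
  rw [List.map_map]
  induction l with
  | nil => simp
  | cons p t ih => simp only [List.map_cons, List.sum_cons, Function.comp_def] at ih ⊢; rw [ih]; push_cast; ring

lemma cf_half (l : List (ℚ × ℕ)) : cf (half l) = cf l / 2 := by
  unfold cf half
  rw [List.map_map]
  induction l with
  | nil => simp
  | cons p t ih => simp at ih ⊢; push_cast; rw [ih]; ring

lemma gv_avg (f : ℕ → X × Y → ℝ) (l₁ l₂ : List (ℚ × ℕ)) (z : X × Y) :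
    gv f (avg l₁ l₂) z = (gv f l₁ z + gv f l₂ z) / 2 := by
  unfold avg
  unfold gv
  rw [List.map_append, List.sum_append]
  have h1 := gv_half f l₁ z
  have h2 := gv_half f l₂ z
  unfold gv at h1 h2
  rw [h1, h2]; ring

lemma ok_avg {n₁ n₂ n : ℕ} {l₁ l₂ : List (ℚ × ℕ)} (h₁ : ok n₁ l₁) (h₂ : ok n₂ l₂)
    (hn1 : n ≤ n₁) (hn2 : n ≤ n₂) : ok n (avg l₁ l₂) := by
  obtain ⟨a1, b1, c1⟩ := h₁
  obtain ⟨a2, b2, c2⟩ := h₂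
  refine ⟨?_, ?_, ?_⟩
  · intro p hp
    simp only [avg, half, List.mem_append, List.mem_map] at hp
    rcases hp with ⟨q, hq, rfl⟩ | ⟨q, hq, rfl⟩
    · have := a1 q hq; positivity
    · have := a2 q hq; positivity
  · have e1 := cf_half l₁
    have e2 := cf_half l₂
    unfold avg cf at *
    rw [List.map_append, List.sum_append, e1, e2, b1, b2]
    norm_num
  · intro p hp
    simp only [avg, half, List.mem_append, List.mem_map] at hp
    rcases hp with ⟨q, hq, rfl⟩ | ⟨q, hq, rfl⟩
    · exact le_trans hn1 (c1 q hq)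
    · exact le_trans hn2 (c2 q hq)

lemma gv_nonneg {f : ℕ → X × Y → ℝ} (hf : ∀ k z, 0 ≤ f k z) {l : List (ℚ × ℕ)}
    (hl : ∀ p ∈ l, 0 ≤ p.1) (z : X × Y) : 0 ≤ gv f l z := by
  apply List.sum_nonneg
  intro a ha
  simp only [List.mem_map] at ha
  obtain ⟨p, hp, rfl⟩ := ha
  have := hl p hp
  have := hf p.2 z
  positivity

lemma gv_eq_sub {f : ℕ → X × Y → ℝ} {Yn : ℕ → X × Y → ℝ} {Cz : ℝ} {z : X × Y}
    {l : List (ℚ × ℕ)} (hfz : ∀ p ∈ l, f p.2 z = Yn p.2 z - Cz) :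
    (l.map fun p => (p.1 : ℝ) * Yn p.2 z).sum = gv f l z + cf l * Cz := by
  unfold gv cf
  induction l with
  | nil => simp
  | cons p t ih =>
    have h := hfz p (List.mem_cons_self)
    have ht := ih fun q hq => hfz q (List.mem_cons_of_mem _ hq)
    simp only [List.map_cons, List.sum_cons]
    rw [ht, h]; ring




def uu (t : ℝ) : ℝ := 1 - Real.exp (-t)

lemma uu_lt_one (t : ℝ) : uu t < 1 := by
  unfold uu
  have := Real.exp_pos (-t)
  linarith

lemma uu_nonneg {t : ℝ} (h : 0 ≤ t) : 0 ≤ uu t := by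
  unfold uu
  have : Real.exp (-t) ≤ 1 := Real.exp_le_one_iff.2 (by linarith)
  linarith

lemma uu_avg_identity (a b : ℝ) :
    uu ((a + b) / 2) = (uu a + uu b) / 2
      + (Real.exp (-(a / 2)) - Real.exp (-(b / 2))) ^ 2 / 2 := by
  unfold uu
  have ha : Real.exp (-a) = Real.exp (-(a/2)) * Real.exp (-(a/2)) := by
    rw [← Real.exp_add]; ring_nf
  have hb : Real.exp (-b) = Real.exp (-(b/2)) * Real.exp (-(b/2)) := by
    rw [← Real.exp_add]; ring_nf
  have hab : Real.exp (-((a + b) / 2)) = Real.exp (-(a/2)) * Real.exp (-(b/2)) := by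
    rw [← Real.exp_add]; ring_nf
  rw [ha, hb, hab]; ring

lemma uu_sq_diff_le (a b : ℝ) (ha : 0 ≤ a) (hb : 0 ≤ b) :
    (uu a - uu b) ^ 2 ≤ 4 * (Real.exp (-(a / 2)) - Real.exp (-(b / 2))) ^ 2 := by
  have ha2 : Real.exp (-(a/2)) ≤ 1 := Real.exp_le_one_iff.2 (by linarith)
  have hb2 : Real.exp (-(b/2)) ≤ 1 := Real.exp_le_one_iff.2 (by linarith)
  have hap : 0 < Real.exp (-(a/2)) := Real.exp_pos _
  have hbp : 0 < Real.exp (-(b/2)) := Real.exp_pos _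
  have ea : Real.exp (-a) = Real.exp (-(a/2)) * Real.exp (-(a/2)) := by
    rw [← Real.exp_add]; ring_nf
  have eb : Real.exp (-b) = Real.exp (-(b/2)) * Real.exp (-(b/2)) := by
    rw [← Real.exp_add]; ring_nf
  unfold uu
  rw [ea, eb]
  set p := Real.exp (-(a/2))
  set q := Real.exp (-(b/2))
  have key : (1 - p * p - (1 - q * q)) ^ 2 = (p - q) ^ 2 * (p + q) ^ 2 := by ring
  have h4 : (p + q) ^ 2 ≤ 4 := by nlinarith
  calc (1 - p * p - (1 - q * q)) ^ 2 = (p - q) ^ 2 * (p + q) ^ 2 := key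
    _ ≤ (p - q) ^ 2 * 4 := by nlinarith [sq_nonneg (p - q)]
    _ = 4 * (p - q) ^ 2 := by ring

lemma gap_nonneg (a b : ℝ) :
    0 ≤ uu ((a + b) / 2) - (uu a + uu b) / 2 := by
  rw [uu_avg_identity]
  have := sq_nonneg (Real.exp (-(a / 2)) - Real.exp (-(b / 2)))
  linarith




lemma uu_le_one (t : ℝ) : uu t ≤ 1 := by
  unfold uu; have := Real.exp_pos (-t); linarith

def dd : ℕ → List (ℚ × ℕ) := Denumerable.ofNat _

lemma dd_surj (l : List (ℚ × ℕ)) : ∃ m, dd m = l :=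
  ⟨@Encodable.encode _ Denumerable.toEncodable l, by unfold dd; exact Denumerable.ofNat_encode l⟩

def II (P : Kernel X Y) (f : ℕ → X × Y → ℝ) (x : X) (l : List (ℚ × ℕ)) : ℝ≥0∞ :=
  ∫⁻ y, ENNReal.ofReal (uu (gv f l (x, y))) ∂(P x)

def ss (P : Kernel X Y) (f : ℕ → X × Y → ℝ) (n : ℕ) (x : X) : ℝ≥0∞ :=
  ⨆ m, if ok n (dd m) then II P f x (dd m) else 0

def sb (P : Kernel X Y) (f : ℕ → X × Y → ℝ) (x : X) : ℝ≥0∞ := ⨅ n, ss P f n x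

variable (P : Kernel X Y) (f : ℕ → X × Y → ℝ)

lemma II_le_one [IsMarkovKernel P] (x : X) (l : List (ℚ × ℕ)) : II P f x l ≤ 1 := by
  unfold II
  calc ∫⁻ y, ENNReal.ofReal (uu (gv f l (x, y))) ∂(P x)
      ≤ ∫⁻ _, 1 ∂(P x) := by
        apply lintegral_mono
        intro y
        exact ENNReal.ofReal_le_one.2 (uu_le_one _)
    _ = 1 := by simp

lemma ss_le_one [IsMarkovKernel P] (n : ℕ) (x : X) : ss P f n x ≤ 1 := by
  apply iSup_le
  intro m
  by_cases h : ok n (dd m)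
  · simpa [h] using II_le_one P f x (dd m)
  · simp [h]

lemma sb_le_one [IsMarkovKernel P] (x : X) : sb P f x ≤ 1 :=
  le_trans (iInf_le _ 0) (ss_le_one P f 0 x)

lemma ok_mono {m n : ℕ} (h : m ≤ n) {l : List (ℚ × ℕ)} (hl : ok n l) : ok m l :=
  ⟨hl.1, hl.2.1, fun p hp => le_trans h (hl.2.2 p hp)⟩

lemma ss_anti (x : X) : Antitone fun n => ss P f n x := by
  intro m n hmn
  apply iSup_mono
  intro i
  by_cases h : ok n (dd i)
  · simp [h, ok_mono hmn h]
  · simp [h]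

lemma tendsto_ss (x : X) : Tendsto (fun n => ss P f n x) atTop (nhds (sb P f x)) :=
  tendsto_atTop_iInf (ss_anti P f x)

lemma exists_ok (n : ℕ) : ∃ m, ok n (dd m) := by
  obtain ⟨m, hm⟩ := dd_surj [(1, n)]
  exact ⟨m, by rw [hm]; refine ⟨by simp, by simp [cf], by simp⟩⟩

lemma II_le_ss [IsMarkovKernel P] {n m : ℕ} (h : ok n (dd m)) (x : X) :
    II P f x (dd m) ≤ ss P f n x := by
  have := le_iSup (fun m => if ok n (dd m) then II P f x (dd m) else 0) m
  simpa [h, ss] using this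

lemma eps_pos (j : ℕ) : (0 : ℝ≥0∞) < 2⁻¹ ^ j := by
  apply ENNReal.pow_pos
  simp

lemma eps_ne_top (j : ℕ) : (2⁻¹ : ℝ≥0∞) ^ j ≠ ⊤ :=
  ENNReal.pow_ne_top (by simp)

lemma eps_anti {i j : ℕ} (h : i ≤ j) : (2⁻¹ : ℝ≥0∞) ^ j ≤ 2⁻¹ ^ i :=
  pow_le_pow_of_le_one zero_le (by simp [ENNReal.inv_le_one]) h

lemma exN [IsMarkovKernel P] (j : ℕ) (x : X) :
    ∃ n, j ≤ n ∧ ss P f n x ≤ sb P f x + 2⁻¹ ^ j := by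
  have hlt : sb P f x < sb P f x + 2⁻¹ ^ j :=
    ENNReal.lt_add_right (ne_top_of_le_ne_top ENNReal.one_ne_top (sb_le_one P f x))
      (eps_pos j).ne'
  have hev : ∀ᶠ n in atTop, ss P f n x < sb P f x + 2⁻¹ ^ j :=
    (tendsto_ss P f x).eventually_lt_const hlt
  obtain ⟨n, hn1, hn2⟩ := ((eventually_ge_atTop j).and hev).exists
  exact ⟨n, hn1, hn2.le⟩

variable [IsMarkovKernel P]

def NN (j : ℕ) (x : X) : ℕ := Nat.find (exN P f j x)

lemma NN_ge (j : ℕ) (x : X) : j ≤ NN P f j x := (Nat.find_spec (exN P f j x)).1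

lemma NN_spec (j : ℕ) (x : X) : ss P f (NN P f j x) x ≤ sb P f x + 2⁻¹ ^ j :=
  (Nat.find_spec (exN P f j x)).2

lemma NN_mono {i j : ℕ} (h : i ≤ j) (x : X) : NN P f i x ≤ NN P f j x := by
  apply Nat.find_min'
  exact ⟨le_trans h (NN_ge P f j x), le_trans (NN_spec P f j x)
    (add_le_add le_rfl (eps_anti h))⟩

lemma exM (j : ℕ) (x : X) :
    ∃ m, ok (NN P f j x) (dd m) ∧
      ss P f (NN P f j x) x ≤ II P f x (dd m) + 2⁻¹ ^ j := by
  set n := NN P f j x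
  by_cases hs : ss P f n x ≤ 2⁻¹ ^ j
  · obtain ⟨m, hm⟩ := exists_ok n
    exact ⟨m, hm, le_trans hs le_add_self⟩
  · push_neg at hs
    have hne : ss P f n x ≠ 0 := fun h => by simp [h] at hs
    have hlt : ss P f n x - 2⁻¹ ^ j < ss P f n x :=
      ENNReal.sub_lt_self (ne_top_of_le_ne_top ENNReal.one_ne_top (ss_le_one P f n x))
        hne (eps_pos j).ne'
    rw [ss] at hlt
    obtain ⟨m, hm⟩ := lt_iSup_iff.1 hlt
    by_cases hok : ok n (dd m)
    · rw [if_pos hok] at hm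
      exact ⟨m, hok, tsub_le_iff_right.1 hm.le⟩
    · rw [if_neg hok] at hm
      exact absurd hm (by simp)

def MM (j : ℕ) (x : X) : ℕ := Nat.find (exM P f j x)

lemma MM_ok (j : ℕ) (x : X) : ok (NN P f j x) (dd (MM P f j x)) :=
  (Nat.find_spec (exM P f j x)).1

lemma MM_spec (j : ℕ) (x : X) :
    ss P f (NN P f j x) x ≤ II P f x (dd (MM P f j x)) + 2⁻¹ ^ j :=
  (Nat.find_spec (exM P f j x)).2

lemma exJ (n : ℕ) (x : X) : ∃ j, n ≤ NN P f j x := ⟨n, NN_ge P f n x⟩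

def JJ (n : ℕ) (x : X) : ℕ := Nat.find (exJ P f n x)

lemma JJ_spec (n : ℕ) (x : X) : n ≤ NN P f (JJ P f n x) x := Nat.find_spec (exJ P f n x)

lemma JJ_tendsto (x : X) : Tendsto (fun n => JJ P f n x) atTop atTop := by
  rw [tendsto_atTop]
  intro b
  filter_upwards [eventually_ge_atTop (NN P f b x + 1)] with n hn
  by_contra hb
  push_neg at hb
  have h1 : n ≤ NN P f (JJ P f n x) x := JJ_spec P f n x
  have h2 : NN P f (JJ P f n x) x ≤ NN P f b x := NN_mono P f hb.le x
  omega



/-! ### measurability -/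

lemma continuous_uu : Continuous uu := by
  unfold uu
  continuity

lemma meas_gv (hf : ∀ k, Measurable (f k)) (l : List (ℚ × ℕ)) : Measurable (gv f l) := by
  unfold gv
  induction l with
  | nil => simpa using measurable_const
  | cons p t ih =>
    simp only [List.map_cons, List.sum_cons]
    exact ((hf p.2).const_mul _).add ih

lemma meas_II (hf : ∀ k, Measurable (f k)) (l : List (ℚ × ℕ)) :
    Measurable fun x => II P f x l := by
  apply Measurable.lintegral_kernel_prod_right
  exact ENNReal.measurable_ofReal.comp (continuous_uu.measurable.comp (meas_gv f hf l))

lemma meas_ss (hf : ∀ k, Measurable (f k)) (n : ℕ) : Measurable (ss P f n) := by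
  unfold ss
  apply Measurable.iSup
  intro m
  by_cases h : ok n (dd m)
  · simp only [if_pos h]
    exact meas_II P f hf (dd m)
  · simp only [if_neg h]
    exact measurable_const

lemma meas_sb (hf : ∀ k, Measurable (f k)) : Measurable (sb P f) := by
  unfold sb
  exact Measurable.iInf fun n => meas_ss P f hf n

lemma measurable_nat_dep {A Z : Type*} [MeasurableSpace A] [MeasurableSpace Z] {N : A → ℕ}
    (hN : Measurable N)
    {F : ℕ → A → Z} (hF : ∀ n, Measurable (F n)) : Measurable fun x => F (N x) x := by
  intro t ht
  have he : (fun x => F (N x) x) ⁻¹' t = ⋃ n, (N ⁻¹' {n}) ∩ (F n ⁻¹' t) := by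
    ext x
    simp only [Set.mem_preimage, Set.mem_iUnion, Set.mem_inter_iff, Set.mem_singleton_iff]
    constructor
    · intro h
      exact ⟨N x, rfl, h⟩
    · rintro ⟨n, rfl, h⟩
      exact h
  rw [he]
  exact MeasurableSet.iUnion fun n => (hN (measurableSet_singleton n)).inter (hF n ht)

lemma meas_NN (hf : ∀ k, Measurable (f k)) (j : ℕ) : Measurable (NN P f j) := by
  unfold NN
  apply measurable_find
  intro k
  by_cases hk : j ≤ k
  · simp only [hk, true_and]
    exact measurableSet_le (meas_ss P f hf k) ((meas_sb P f hf).add measurable_const)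
  · simp [hk]

lemma meas_MM (hf : ∀ k, Measurable (f k)) (j : ℕ) : Measurable (MM P f j) := by
  unfold MM
  apply measurable_find
  intro m
  have h1 : MeasurableSet {x | ok (NN P f j x) (dd m)} :=
    meas_NN P f hf j (show MeasurableSet {n | ok n (dd m)} from trivial)
  have h2 : MeasurableSet {x | ss P f (NN P f j x) x ≤ II P f x (dd m) + 2⁻¹ ^ j} :=
    measurableSet_le (measurable_nat_dep (meas_NN P f hf j) fun n => meas_ss P f hf n)
      ((meas_II P f hf (dd m)).add measurable_const)
  exact h1.inter h2

lemma meas_JJ (hf : ∀ k, Measurable (f k)) (n : ℕ) : Measurable (JJ P f n) := by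
  unfold JJ
  apply measurable_find
  intro j
  exact meas_NN P f hf j (show MeasurableSet {m | n ≤ m} from trivial)

lemma meas_LL (hf : ∀ k, Measurable (f k)) (n : ℕ) :
    Measurable fun x => MM P f (JJ P f n x) x :=
  measurable_nat_dep (meas_JJ P f hf n) fun j => meas_MM P f hf j

/-! ### core estimate -/

lemma key1 (hf : ∀ k, Measurable (f k)) (hf0 : ∀ k z, 0 ≤ f k z) (x : X) {i j : ℕ}
    (hij : i ≤ j) :
    ∫⁻ y, ENNReal.ofReal
        ((uu (gv f (dd (MM P f i x)) (x, y)) - uu (gv f (dd (MM P f j x)) (x, y))) ^ 2) ∂(P x)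
      ≤ 16 * 2⁻¹ ^ i := by
  set li := dd (MM P f i x) with hli
  set lj := dd (MM P f j x) with hlj
  have hoki : ok (NN P f i x) li := MM_ok P f i x
  have hokj : ok (NN P f j x) lj := MM_ok P f j x
  have hmono : NN P f i x ≤ NN P f j x := NN_mono P f hij x
  have hoka : ok (NN P f i x) (avg li lj) := ok_avg hoki hokj le_rfl hmono
  have hmeasy : ∀ l : List (ℚ × ℕ), Measurable fun y => ENNReal.ofReal (uu (gv f l (x, y))) :=
    fun l => (ENNReal.measurable_ofReal.comp
      (continuous_uu.measurable.comp (meas_gv f hf l))).comp measurable_prodMk_left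
  set G : Y → ℝ := fun y =>
    (Real.exp (-(gv f li (x, y) / 2)) - Real.exp (-(gv f lj (x, y) / 2))) ^ 2 / 2 with hGdef
  have hGnn : ∀ y, 0 ≤ G y := fun y => by positivity
  have hGmeas : Measurable fun y => ENNReal.ofReal (G y) := by
    apply ENNReal.measurable_ofReal.comp
    apply Measurable.div_const
    apply Measurable.pow_const
    apply Measurable.sub
    · exact (Real.continuous_exp.measurable).comp
        (((meas_gv f hf li).comp measurable_prodMk_left).div_const 2).neg
    · exact (Real.continuous_exp.measurable).comp
        (((meas_gv f hf lj).comp measurable_prodMk_left).div_const 2).neg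
  have hannn : ∀ y, 0 ≤ uu (gv f li (x, y)) :=
    fun y => uu_nonneg (gv_nonneg hf0 hoki.1 _)
  have hbnnn : ∀ y, 0 ≤ uu (gv f lj (x, y)) :=
    fun y => uu_nonneg (gv_nonneg hf0 hokj.1 _)
  have hsplit : ∀ y, ENNReal.ofReal (uu (gv f (avg li lj) (x, y)))
      = (ENNReal.ofReal (uu (gv f li (x, y))) + ENNReal.ofReal (uu (gv f lj (x, y)))) / 2
        + ENNReal.ofReal (G y) := by
    intro y
    have hid : uu (gv f (avg li lj) (x, y))
        = (uu (gv f li (x, y)) + uu (gv f lj (x, y))) / 2 + G y := by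
      rw [gv_avg, uu_avg_identity]
    have h1 := hannn y
    have h2 := hbnnn y
    rw [hid, ENNReal.ofReal_add (by positivity) (hGnn y)]
    congr 1
    rw [ENNReal.ofReal_div_of_pos (by norm_num),
      ENNReal.ofReal_add (hannn y) (hbnnn y)]
    norm_num
  have hIa : II P f x (avg li lj)
      = (II P f x li + II P f x lj) / 2 + ∫⁻ y, ENNReal.ofReal (G y) ∂(P x) := by
    unfold II
    rw [lintegral_congr hsplit, lintegral_add_right _ hGmeas]
    congr 1
    simp_rw [ENNReal.div_eq_inv_mul]
    rw [lintegral_const_mul' _ _ (by norm_num), lintegral_add_right _ (hmeasy lj)]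
  -- upper bound for II of avg
  obtain ⟨ma, hma⟩ := dd_surj (avg li lj)
  have hIale : II P f x (avg li lj) ≤ ss P f (NN P f i x) x := by
    rw [← hma]
    exact II_le_ss P f (by rw [hma]; exact hoka) x
  have hup : II P f x (avg li lj) ≤ sb P f x + 2⁻¹ ^ i := hIale.trans (NN_spec P f i x)
  -- lower bounds
  have hlo1 : sb P f x ≤ II P f x li + 2⁻¹ ^ i :=
    le_trans (iInf_le _ (NN P f i x)) (MM_spec P f i x)
  have hlo2 : sb P f x ≤ II P f x lj + 2⁻¹ ^ i :=
    le_trans (le_trans (iInf_le _ (NN P f j x)) (MM_spec P f j x))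
      (add_le_add le_rfl (eps_anti hij))
  have hlo : sb P f x ≤ (II P f x li + II P f x lj) / 2 + 2⁻¹ ^ i := by
    have h := add_le_add hlo1 hlo2
    have h2 : sb P f x + sb P f x = (sb P f x + sb P f x) := rfl
    calc sb P f x = (sb P f x + sb P f x) / 2 := by
          rw [ENNReal.add_div, ENNReal.add_halves]
      _ ≤ ((II P f x li + 2⁻¹ ^ i) + (II P f x lj + 2⁻¹ ^ i)) / 2 :=
          ENNReal.div_le_div_right h _
      _ = (II P f x li + II P f x lj) / 2 + 2⁻¹ ^ i := by
          have hre : (II P f x li + 2⁻¹ ^ i) + (II P f x lj + 2⁻¹ ^ i)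
              = (II P f x li + II P f x lj) + (2⁻¹ ^ i + 2⁻¹ ^ i) := by ring
          rw [hre, ENNReal.add_div]
          congr 1
          rw [ENNReal.add_div, ENNReal.add_halves]
  -- conclude bound on gap integral
  have hGint : ∫⁻ y, ENNReal.ofReal (G y) ∂(P x) ≤ 2 * 2⁻¹ ^ i := by
    have hne : (II P f x li + II P f x lj) / 2 ≠ ⊤ := by
      apply ne_top_of_le_ne_top (b := (1 : ℝ≥0∞))
      · exact ENNReal.one_ne_top
      · calc (II P f x li + II P f x lj) / 2 ≤ (1 + 1) / 2 :=
              ENNReal.div_le_div_right (add_le_add (II_le_one P f x li) (II_le_one P f x lj)) _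
          _ = 1 := by
              rw [one_add_one_eq_two]
              exact ENNReal.div_self (by norm_num) (by norm_num)
    have hchain : (II P f x li + II P f x lj) / 2 + ∫⁻ y, ENNReal.ofReal (G y) ∂(P x)
        ≤ (II P f x li + II P f x lj) / 2 + 2 * 2⁻¹ ^ i := by
      calc (II P f x li + II P f x lj) / 2 + ∫⁻ y, ENNReal.ofReal (G y) ∂(P x)
          = II P f x (avg li lj) := by rw [hIa, add_comm]
        _ ≤ sb P f x + 2⁻¹ ^ i := hup
        _ ≤ ((II P f x li + II P f x lj) / 2 + 2⁻¹ ^ i) + 2⁻¹ ^ i := add_le_add_left hlo _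
        _ = (II P f x li + II P f x lj) / 2 + 2 * 2⁻¹ ^ i := by rw [add_assoc, two_mul]
    exact (ENNReal.add_le_add_iff_left hne).1 hchain
  -- pointwise domination
  have hdom : ∀ y, ENNReal.ofReal
      ((uu (gv f li (x, y)) - uu (gv f lj (x, y))) ^ 2) ≤ 8 * ENNReal.ofReal (G y) := by
    intro y
    have h8 : (8 : ℝ≥0∞) * ENNReal.ofReal (G y) = ENNReal.ofReal (8 * G y) := by
      rw [ENNReal.ofReal_mul (by norm_num)]
      norm_num
    rw [h8]
    apply ENNReal.ofReal_le_ofReal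
    have hle := uu_sq_diff_le (gv f li (x, y)) (gv f lj (x, y))
      (gv_nonneg hf0 hoki.1 _) (gv_nonneg hf0 hokj.1 _)
    rw [hGdef]
    simp only []
    linarith
  calc ∫⁻ y, ENNReal.ofReal ((uu (gv f li (x, y)) - uu (gv f lj (x, y))) ^ 2) ∂(P x)
      ≤ ∫⁻ y, 8 * ENNReal.ofReal (G y) ∂(P x) := lintegral_mono hdom
    _ = 8 * ∫⁻ y, ENNReal.ofReal (G y) ∂(P x) := lintegral_const_mul _ hGmeas
    _ ≤ 8 * (2 * 2⁻¹ ^ i) := mul_le_mul_right hGint _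
    _ = 16 * 2⁻¹ ^ i := by rw [← mul_assoc]; norm_num

/-! ### a.e. convergence along the selection -/

lemma aeconv (hf : ∀ k, Measurable (f k)) (hf0 : ∀ k z, 0 ≤ f k z) (x : X) :
    ∀ᵐ y ∂(P x), ∃ L : ℝ,
      Tendsto (fun i => uu (gv f (dd (MM P f i x)) (x, y))) atTop (nhds L) := by
  set vA : ℕ → Y → ℝ := fun i y => uu (gv f (dd (MM P f i x)) (x, y)) with hvA
  have hvAmeas : ∀ i, Measurable (vA i) := fun i =>
    (continuous_uu.measurable.comp (meas_gv f hf (dd (MM P f i x)))).comp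
      measurable_prodMk_left
  set E : ℕ → Set Y := fun i => {y | ((3:ℝ)/4) ^ i ≤ |vA i y - vA (i+1) y|} with hE
  have hcheb : ∀ i, (P x) (E i) ≤ 16 * ENNReal.ofReal ((8:ℝ)/9) ^ i := by
    intro i
    have hkey : ∫⁻ y, ENNReal.ofReal ((vA i y - vA (i+1) y) ^ 2) ∂(P x) ≤ 16 * 2⁻¹ ^ i :=
      key1 P f hf hf0 x (Nat.le_succ i)
    set c2e : ℝ≥0∞ := ENNReal.ofReal (((9:ℝ)/16) ^ i) with hc2e
    have hsub : E i ⊆ {y | c2e ≤ ENNReal.ofReal ((vA i y - vA (i+1) y) ^ 2)} := by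
      intro y hy
      simp only [hE, Set.mem_setOf_eq] at hy ⊢
      apply ENNReal.ofReal_le_ofReal
      have h1 : ((9:ℝ)/16) ^ i = (((3:ℝ)/4) ^ i) ^ 2 := by
        rw [← pow_mul, mul_comm, pow_mul]
        norm_num
      rw [h1, ← sq_abs (vA i y - vA (i+1) y)]
      have h0 : (0:ℝ) ≤ ((3:ℝ)/4) ^ i := by positivity
      exact pow_le_pow_left₀ h0 hy 2
    have hmul : c2e * (P x) (E i) ≤ 16 * 2⁻¹ ^ i := by
      calc c2e * (P x) (E i)
          ≤ c2e * (P x) {y | c2e ≤ ENNReal.ofReal ((vA i y - vA (i+1) y) ^ 2)} :=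
            mul_le_mul_right (measure_mono hsub) _
        _ ≤ ∫⁻ y, ENNReal.ofReal ((vA i y - vA (i+1) y) ^ 2) ∂(P x) :=
            mul_meas_ge_le_lintegral
              (ENNReal.measurable_ofReal.comp (((hvAmeas i).sub (hvAmeas (i+1))).pow_const 2)) _
        _ ≤ 16 * 2⁻¹ ^ i := hkey
    have hfact : (2⁻¹ : ℝ≥0∞) ^ i = c2e * ENNReal.ofReal ((8:ℝ)/9) ^ i := by
      rw [hc2e, ENNReal.ofReal_pow (by norm_num), ← mul_pow, ← ENNReal.ofReal_mul (by norm_num)]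
      norm_num
      congr 1
      rw [show (1:ℝ)/2 = (2:ℝ)⁻¹ by norm_num, ENNReal.ofReal_inv_of_pos (by norm_num),
        ENNReal.ofReal_ofNat]
    have hc2e0 : c2e ≠ 0 := by
      rw [hc2e]
      simp only [ne_eq, ENNReal.ofReal_eq_zero, not_le]
      positivity
    have hc2et : c2e ≠ ⊤ := ENNReal.ofReal_ne_top
    have : c2e * (P x) (E i) ≤ c2e * (16 * ENNReal.ofReal ((8:ℝ)/9) ^ i) := by
      calc c2e * (P x) (E i) ≤ 16 * 2⁻¹ ^ i := hmul
        _ = c2e * (16 * ENNReal.ofReal ((8:ℝ)/9) ^ i) := by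
            rw [hfact]; ring
    exact (ENNReal.mul_le_mul_iff_right hc2e0 hc2et).1 this
  have htsum : (∑' i, (P x) (E i)) ≠ ⊤ := by
    apply ne_top_of_le_ne_top (b := 16 * (1 - ENNReal.ofReal ((8:ℝ)/9))⁻¹)
    · apply ENNReal.mul_ne_top (by norm_num)
      rw [ENNReal.inv_ne_top]
      simp only [ne_eq, tsub_eq_zero_iff_le, not_le]
      exact ENNReal.ofReal_lt_one.2 (by norm_num)
    · calc ∑' i, (P x) (E i) ≤ ∑' i, 16 * ENNReal.ofReal ((8:ℝ)/9) ^ i :=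
            ENNReal.tsum_le_tsum hcheb
        _ = 16 * (1 - ENNReal.ofReal ((8:ℝ)/9))⁻¹ := by
            rw [ENNReal.tsum_mul_left, ENNReal.tsum_geometric]
  filter_upwards [ae_eventually_notMem htsum] with y hy
  obtain ⟨K, hK⟩ := eventually_atTop.1 hy
  have hdist : ∀ m, dist (vA (m + K) y) (vA (m + K + 1) y) ≤ ((3:ℝ)/4) ^ (m + K) := by
    intro m
    have := hK (m + K) (Nat.le_add_left K m)
    simp only [hE, Set.mem_setOf_eq, not_le] at this
    rw [Real.dist_eq]
    exact this.le
  have hsummable : Summable fun m => ((3:ℝ)/4) ^ (m + K) := by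
    simp_rw [pow_add]
    exact (summable_geometric_of_lt_one (by norm_num) (by norm_num)).mul_right _
  have hcauchy : CauchySeq fun m => vA (m + K) y :=
    cauchySeq_of_dist_le_of_summable _ (fun m => by simpa [Nat.succ_add] using hdist m) hsummable
  obtain ⟨L, hL⟩ := cauchySeq_tendsto_of_complete hcauchy
  exact ⟨L, (tendsto_add_atTop_iff_nat K).1 hL⟩

lemma conv_of_uu {h : ℕ → ℝ} {L : ℝ}
    (hL : Tendsto (fun i => uu (h i)) atTop (nhds L)) (c : ℝ) :
    ∃ H : EReal, Tendsto (fun i => ((h i + c : ℝ) : EReal)) atTop (nhds H) := by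
  have hexp : ∀ i, Real.exp (-h i) = 1 - uu (h i) := fun i => by unfold uu; ring
  by_cases hL1 : L = 1
  · refine ⟨⊤, ?_⟩
    have h0 : Tendsto (fun i => Real.exp (-h i)) atTop (nhds 0) := by
      simp_rw [hexp]
      rw [hL1] at hL
      have := tendsto_const_nhds (x := (1:ℝ)) (f := atTop (α := ℕ)) |>.sub hL
      simpa using this
    have h0' : Tendsto (fun i => Real.exp (-h i)) atTop (nhdsWithin 0 (Set.Ioi 0)) :=
      tendsto_nhdsWithin_of_tendsto_nhds_of_eventually_within _ h0
        (Eventually.of_forall fun i => Real.exp_pos _)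
    have hlog : Tendsto (fun i => Real.log (Real.exp (-h i))) atTop atBot :=
      Real.tendsto_log_nhdsGT_zero.comp h0'
    simp_rw [Real.log_exp] at hlog
    have htop : Tendsto (fun i => h i) atTop atTop := tendsto_neg_atBot_iff.1 hlog
    have htop' : Tendsto (fun i => h i + c) atTop atTop :=
      tendsto_atTop_add_const_right _ c htop
    rw [EReal.tendsto_nhds_top_iff_real]
    intro r
    filter_upwards [htop'.eventually_gt_atTop r] with i hi
    exact_mod_cast EReal.coe_lt_coe_iff.2 hi
  · have hle : L ≤ 1 := le_of_tendsto hL (Eventually.of_forall fun i => uu_le_one _)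
    have hpos : 0 < 1 - L := by
      rcases lt_or_eq_of_le hle with h | h
      · linarith
      · exact absurd h hL1
    have h1 : Tendsto (fun i => 1 - uu (h i)) atTop (nhds (1 - L)) :=
      tendsto_const_nhds.sub hL
    have hlog : Tendsto (fun i => Real.log (1 - uu (h i))) atTop
        (nhds (Real.log (1 - L))) :=
      (Real.continuousAt_log hpos.ne').tendsto.comp h1
    have hli : ∀ i, Real.log (1 - uu (h i)) = -h i := fun i => by
      rw [← hexp i, Real.log_exp]
    simp_rw [hli] at hlog
    have hh' : Tendsto (fun i => h i + c) atTop (nhds (-Real.log (1 - L) + c)) := by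
      have := hlog.neg
      simp_rw [neg_neg] at this
      exact this.add_const c
    exact ⟨((-Real.log (1 - L) + c : ℝ) : EReal), EReal.tendsto_coe.2 hh'⟩

end MKomlos

open MKomlos

/-- Measurable Komlós-type lemma with parameters. -/
theorem measurable_komlos
    {X Y : Type*} [MeasurableSpace X] [MeasurableSpace Y]
    [StandardBorelSpace X] [StandardBorelSpace Y]
    (Yn : ℕ → X × Y → ℝ) (hYn : ∀ n, Measurable (Yn n))
    (P : Kernel X Y) [IsMarkovKernel P]
    (C : X × Y → ℝ) (hC : Measurable C)
    (hbound : ∀ x : X, ∀ᵐ y ∂(P x), ∀ n, C (x, y) ≤ Yn n (x, y)) :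
    ∃ (lam : ℕ → ℕ → X → ℝ) (Ytil : ℕ → X × Y → ℝ) (Ylim : X × Y → EReal),
      (∀ n k, Measurable (lam n k)) ∧
      (∀ n, Measurable (Ytil n)) ∧
      Measurable Ylim ∧
      (∀ n k x, 0 ≤ lam n k x ∧ lam n k x ≤ 1) ∧
      (∀ n k x, k < n → lam n k x = 0) ∧
      (∀ n x, {k | lam n k x ≠ 0}.Finite) ∧
      (∀ n x, ∑' k, lam n k x = 1) ∧
      (∀ n x y, Ytil n (x, y) = ∑' k, lam n k x * Yn k (x, y)) ∧
      (∀ x : X, ∀ᵐ y ∂(P x),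
        Tendsto (fun n => ((Ytil n (x, y) : ℝ) : EReal)) atTop (nhds (Ylim (x, y)))) := by
  classical
  set f : ℕ → X × Y → ℝ := fun k z => max (Yn k z - C z) 0 with hfdef
  have hf : ∀ k, Measurable (f k) := fun k => ((hYn k).sub hC).max measurable_const
  have hf0 : ∀ k z, 0 ≤ f k z := fun k z => le_max_right _ _
  set lam : ℕ → ℕ → X → ℝ :=
    fun n k x => wt (dd (MM P f (JJ P f n x) x)) k with hlamdef
  set Ytil : ℕ → X × Y → ℝ :=
    fun n z => gv Yn (dd (MM P f (JJ P f n z.1) z.1)) z with hYtildef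
  set Ylim : X × Y → EReal :=
    fun z => Filter.limsup (fun n => ((Ytil n z : ℝ) : EReal)) atTop with hYlimdef
  have hmeasYtil : ∀ n, Measurable (Ytil n) := by
    intro n
    show Measurable fun z : X × Y => gv Yn (dd (MM P f (JJ P f n z.1) z.1)) z
    exact measurable_nat_dep (N := fun z : X × Y => MM P f (JJ P f n z.1) z.1)
      ((meas_LL P f hf n).comp measurable_fst)
      (F := fun m => gv Yn (dd m)) (fun m => meas_gv Yn hYn (dd m))
  refine ⟨lam, Ytil, Ylim, ?_, hmeasYtil, ?_, ?_, ?_, ?_, ?_, ?_, ?_⟩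
  · -- measurability of lam
    intro n k
    exact (measurable_from_nat (f := fun m => wt (dd m) k)).comp (meas_LL P f hf n)
  · -- measurability of Ylim
    have hrw : Ylim = fun z => ⨅ n, ⨆ i, ⨆ _ : n ≤ i, ((Ytil i z : ℝ) : EReal) := by
      funext z
      rw [hYlimdef]
      exact limsup_eq_iInf_iSup_of_nat
    rw [hrw]
    apply Measurable.iInf
    intro n
    apply Measurable.iSup
    intro i
    apply Measurable.iSup
    intro _
    exact measurable_coe_real_ereal.comp (hmeasYtil i)
  · -- bounds on lam
    intro n k x
    have hok := MM_ok P f (JJ P f n x) x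
    constructor
    · exact wt_nonneg hok.1 k
    · exact le_trans (wt_le_cf hok.1 k) (le_of_eq hok.2.1)
  · -- lam vanishes below n
    intro n k x hk
    have hok := MM_ok P f (JJ P f n x) x
    have hn : ∀ p ∈ dd (MM P f (JJ P f n x) x), n ≤ p.2 :=
      fun p hp => le_trans (JJ_spec P f n x) (hok.2.2 p hp)
    exact wt_eq_zero_of_lt hn hk
  · -- finite support
    intro n x
    apply Set.Finite.subset (((dd (MM P f (JJ P f n x) x)).map Prod.snd).toFinset.finite_toSet)
    intro k hk
    exact List.mem_toFinset.2 (wt_ne_zero_mem hk)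
  · -- sums to one
    intro n x
    have hok := MM_ok P f (JJ P f n x) x
    have h := tsum_wt_mul (dd (MM P f (JJ P f n x) x)) (fun _ => (1 : ℝ))
    simp only [mul_one] at h
    calc ∑' k, lam n k x = (((dd (MM P f (JJ P f n x) x)).map fun p => (p.1 : ℝ)).sum) := h
      _ = 1 := hok.2.1
  · -- Ytil is the convex combination
    intro n x y
    show gv Yn (dd (MM P f (JJ P f n (x, y).1) (x, y).1)) (x, y)
      = ∑' k, wt (dd (MM P f (JJ P f n x) x)) k * Yn k (x, y)
    rw [gv]
    exact (tsum_wt_mul (dd (MM P f (JJ P f n x) x)) (fun k => Yn k (x, y))).symm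
  · -- a.e. convergence
    intro x
    filter_upwards [aeconv P f hf hf0 x, hbound x] with y hconv hbd
    obtain ⟨L, hL⟩ := hconv
    obtain ⟨H, hH⟩ := conv_of_uu (h := fun i => gv f (dd (MM P f i x)) (x, y)) hL (C (x, y))
    have hcomp : Tendsto
        (fun n => ((gv f (dd (MM P f (JJ P f n x) x)) (x, y) + C (x, y) : ℝ) : EReal))
        atTop (nhds H) := hH.comp (JJ_tendsto P f x)
    have heq : ∀ n, Ytil n (x, y)
        = gv f (dd (MM P f (JJ P f n x) x)) (x, y) + C (x, y) := by
      intro n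
      have hok := MM_ok P f (JJ P f n x) x
      have hfz : ∀ p ∈ dd (MM P f (JJ P f n x) x),
          f p.2 (x, y) = Yn p.2 (x, y) - C (x, y) := by
        intro p hp
        rw [hfdef]
        exact max_eq_left (sub_nonneg.2 (hbd p.2))
      have h := gv_eq_sub (f := f) (Yn := Yn) (Cz := C (x, y)) (z := (x, y))
        (l := dd (MM P f (JJ P f n x) x)) hfz
      rw [hok.2.1, one_mul] at h
      exact h
    have hten : Tendsto (fun n => ((Ytil n (x, y) : ℝ) : EReal)) atTop (nhds H) := by
      simp_rw [heq]
      exact hcomp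
    have hYeq : Ylim (x, y) = H := hten.limsup_eq
    rw [hYeq]
    exact hten
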